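/- The normalized median Genocchi number satisfies h_{n+1} = \sum_{f ∈ M_{n+1}} \prod_{k=1}^{n}(1+f_k)^2 / 2^{l(f)}, where M_{n+1} is the set of Motzkin paths f_0=0, f_1, ..., f_{n+1}=0 and l(f) is the number of indices i with f_{i+1} = f_i + 1 plus the number of indices i with f_{i+1} = f_i - 1. -/

import Mathlib

/-- The normalized median Genocchi number `h m`. -/
noncomputable def genocchi (m : ℕ) : ℕ :=
  Nat.card {S : Fin (m - 1) → Finset (Fin m) //
    (∀ i : Fin (m - 1), (S i).card = (i : ℕ) + 1) ∧
    (∀ i : Fin (m - 1), ∀ h : (i : ℕ) + 1 < m - 1,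
      S i ⊆ S ⟨(i : ℕ) + 1, h⟩ ∪ {⟨(i : ℕ) + 1, by omega⟩})}

/-- Extension of a tuple `(f_1, …, f_n)` by the convention `f_0 = f_{n+1} = 0`. -/
def extTuple (n : ℕ) (f : Fin n → ℕ) (k : ℕ) : ℕ :=
  if h : 1 ≤ k ∧ k ≤ n then f ⟨k - 1, by omega⟩ else 0

/-- The set of Motzkin paths `f_0 = 0, f_1, …, f_{n+1} = 0` (encoded by their interior
values `f_1, …, f_n`): sequences of non-negative integers with `|f_{i+1} - f_i| ≤ 1`. -/
def motzkinSet (n : ℕ) : Set (Fin n → ℕ) :=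
  {f | ∀ i ≤ n,
    extTuple n f (i + 1) = extTuple n f i + 1 ∨
    extTuple n f (i + 1) = extTuple n f i ∨
    extTuple n f i = extTuple n f (i + 1) + 1}

/-- `l(f)`: the number of rises plus the number of falls of the Motzkin path `f`. -/
def risesFalls (n : ℕ) (f : Fin n → ℕ) : ℕ :=
  ((Finset.range (n + 1)).filter fun i => extTuple n f (i + 1) = extTuple n f i + 1).card +
  ((Finset.range (n + 1)).filter fun i => extTuple n f i = extTuple n f (i + 1) + 1).card

open Finset

namespace GenocchiAux

variable {n : ℕ}

/-! ### Basic facts about `extTuple` -/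

lemma ext_zero (n : ℕ) (f : Fin n → ℕ) : extTuple n f 0 = 0 := by simp [extTuple]

lemma ext_top (n : ℕ) (f : Fin n → ℕ) (k : ℕ) (hk : n < k) : extTuple n f k = 0 := by
  unfold extTuple; rw [dif_neg]; omega

lemma ext_succ (n : ℕ) (f : Fin n → ℕ) (i : Fin n) :
    extTuple n f ((i : ℕ) + 1) = f i := by
  have h : 1 ≤ (i : ℕ) + 1 ∧ (i : ℕ) + 1 ≤ n := ⟨by omega, i.isLt⟩
  simp only [extTuple, dif_pos h, Nat.add_sub_cancel, Fin.eta]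

lemma f_val (f : Fin n → ℕ) (k : ℕ) (h1 : 1 ≤ k) (h2 : k ≤ n) :
    f ⟨k - 1, by omega⟩ = extTuple n f k := by
  unfold extTuple; rw [dif_pos ⟨h1, h2⟩]

lemma ext_bound (f : Fin n → ℕ) (hstep : ∀ k ≤ n, extTuple n f (k + 1) ≤ extTuple n f k + 1) :
    ∀ k ≤ n + 1, extTuple n f k ≤ k := by
  intro k
  induction k with
  | zero => intro _; simp [ext_zero]
  | succ k ih => intro hk; have := ih (by omega); have := hstep k (by omega); omega

/-- predicate form of `motzkinSet` membership -/
def MP (n : ℕ) (f : Fin n → ℕ) : Prop :=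
  ∀ i ≤ n,
    extTuple n f (i + 1) = extTuple n f i + 1 ∨
    extTuple n f (i + 1) = extTuple n f i ∨
    extTuple n f i = extTuple n f (i + 1) + 1

instance (n : ℕ) : DecidablePred (MP n) := fun _ => Nat.decidableBallLE _ _

lemma mp_iff (n : ℕ) (f : Fin n → ℕ) : f ∈ motzkinSet n ↔ MP n f := Iff.rfl

lemma mp_step (f : Fin n → ℕ) (hf : MP n f) :
    ∀ k ≤ n, extTuple n f (k + 1) ≤ extTuple n f k + 1 := by
  intro k hk; have := hf k hk; omega

lemma mp_step' (f : Fin n → ℕ) (hf : MP n f) :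
    ∀ k ≤ n, extTuple n f k ≤ extTuple n f (k + 1) + 1 := by
  intro k hk; have := hf k hk; omega

lemma mp_bound (f : Fin n → ℕ) (hf : MP n f) : ∀ k ≤ n + 1, extTuple n f k ≤ k :=
  ext_bound f (mp_step f hf)

/-- The finset of Motzkin paths. -/
noncomputable def motzF (n : ℕ) : Finset (Fin n → ℕ) :=
  ((univ : Finset (Fin n → Fin (n + 2))).image fun g i => (g i : ℕ)).filter (MP n)

lemma coe_motzF (n : ℕ) : (motzF n : Set (Fin n → ℕ)) = motzkinSet n := by
  ext f
  simp only [motzF, coe_filter, Set.mem_setOf_eq, Finset.mem_image, Finset.mem_univ, true_and,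
    mp_iff]
  constructor
  · rintro ⟨-, h⟩; exact h
  · intro h
    refine ⟨⟨fun i => ⟨f i, ?_⟩, funext fun i => rfl⟩, h⟩
    have := mp_bound f h ((i : ℕ) + 1) (by omega)
    rw [ext_succ n f i] at this
    omega

/-! ### Counting auxiliary lemmas -/

lemma card_between {α : Type*} [DecidableEq α] (U A : Finset α) (hAU : A ⊆ U) (m : ℕ)
    (hm : A.card ≤ m) :
    ((U.powerset).filter fun B => A ⊆ B ∧ B.card = m).card
      = (U.card - A.card).choose (m - A.card) := by
  rw [← Finset.card_sdiff_of_subset hAU, ← Finset.card_powersetCard]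
  refine Finset.card_nbij' (fun B => B \ A) (fun C => A ∪ C) ?_ ?_ ?_ ?_ <;>
    simp only [Set.MapsTo, Set.LeftInvOn, Set.RightInvOn, Finset.mem_coe]
  · intro B hB
    simp only [Finset.mem_filter, Finset.mem_powerset] at hB
    obtain ⟨hBU, hAB, hBm⟩ := hB
    rw [Finset.mem_powersetCard]
    exact ⟨Finset.sdiff_subset_sdiff hBU (le_refl _), by rw [Finset.card_sdiff_of_subset hAB, hBm]⟩
  · intro C hC
    rw [Finset.mem_powersetCard] at hC
    obtain ⟨hCU, hCm⟩ := hC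
    have hdisj : Disjoint A C := by
      refine Finset.disjoint_left.2 fun x hxA hxC => ?_
      exact (Finset.mem_sdiff.1 (hCU hxC)).2 hxA
    simp only [Finset.mem_filter, Finset.mem_powerset]
    refine ⟨Finset.union_subset hAU (hCU.trans Finset.sdiff_subset), Finset.subset_union_left, ?_⟩
    rw [Finset.card_union_of_disjoint hdisj, hCm]
    omega
  · intro B hB
    simp only [Finset.mem_filter, Finset.mem_powerset] at hB
    exact Finset.union_sdiff_of_subset hB.2.1
  · intro C hC
    rw [Finset.mem_powersetCard] at hC
    refine Finset.union_sdiff_cancel_left ?_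
    refine Finset.disjoint_left.2 fun x hxA hxC => ?_
    exact (Finset.mem_sdiff.1 (hC.1 hxC)).2 hxA

lemma card_le_fin (j : ℕ) (hj : j ≤ n) :
    ((univ : Finset (Fin (n + 1))).filter fun x : Fin (n + 1) => (x : ℕ) ≤ j).card = j + 1 := by
  have : ((univ : Finset (Fin (n + 1))).filter fun x : Fin (n + 1) => (x : ℕ) ≤ j)
      = Finset.Iic (⟨j, by omega⟩ : Fin (n + 1)) := by
    ext x; simp [Finset.mem_Iic, Fin.le_def]
  rw [this, Fin.card_Iic]

lemma card_gt_fin (j : ℕ) (hj : j ≤ n) :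
    ((univ : Finset (Fin (n + 1))).filter fun x : Fin (n + 1) => j < (x : ℕ)).card = n - j := by
  have : ((univ : Finset (Fin (n + 1))).filter fun x : Fin (n + 1) => j < (x : ℕ))
      = Finset.Ioi (⟨j, by omega⟩ : Fin (n + 1)) := by
    ext x; simp [Finset.mem_Ioi, Fin.lt_def]
  rw [this, Fin.card_Ioi]
  simp

/-! ### The `L`-chains -/

def LPred (n : ℕ) (f : Fin n → ℕ) (j : ℕ) (L : Fin n → Finset (Fin (n + 1))) : Prop :=
  (∀ i : Fin n, ∀ x ∈ L i, (x : ℕ) ≤ (i : ℕ)) ∧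
  (∀ i : Fin n, (i : ℕ) < j → (L i).card = (i : ℕ) + 1 - f i) ∧
  (∀ i : Fin n, j ≤ (i : ℕ) → L i = ∅) ∧
  (∀ i i' : Fin n, (i' : ℕ) = (i : ℕ) + 1 → (i' : ℕ) < j → L i ⊆ L i')

instance (n : ℕ) (f : Fin n → ℕ) (j : ℕ) : DecidablePred (LPred n f j) := fun _ => by
  unfold LPred; infer_instance

def LpartF (n : ℕ) (f : Fin n → ℕ) (j : ℕ) : Finset (Fin n → Finset (Fin (n + 1))) :=
  univ.filter (LPred n f j)

lemma LpartF_zero (n : ℕ) (f : Fin n → ℕ) : LpartF n f 0 = {fun _ => ∅} := by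
  ext L
  simp only [LpartF, Finset.mem_filter, Finset.mem_univ, true_and, Finset.mem_singleton]
  constructor
  · rintro ⟨-, -, h3, -⟩
    exact funext fun i => h3 i (Nat.zero_le _)
  · rintro rfl
    exact ⟨fun i x hx => absurd hx (Finset.notMem_empty x),
      fun i hi => by omega, fun i _ => rfl, fun i i' _ _ => le_refl _⟩

lemma Lcard (f : Fin n → ℕ)
    (hstep : ∀ k ≤ n, extTuple n f (k + 1) ≤ extTuple n f k + 1) :
    ∀ j, j ≤ n → (LpartF n f j).card
      = ∏ i ∈ Finset.range j, Nat.choose (1 + extTuple n f i) (extTuple n f (i + 1)) := by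
  intro j
  induction j with
  | zero => intro _; simp [LpartF_zero]
  | succ j ih =>
    intro hj1
    have hjn : j < n := hj1
    have hj : j ≤ n := le_of_lt hjn
    rw [Finset.prod_range_succ, ← ih hj]
    set jF : Fin n := ⟨j, hjn⟩ with hjF
    have hjFv : (jF : ℕ) = j := rfl
    have hstepj : extTuple n f (j + 1) ≤ extTuple n f j + 1 := hstep j hj
    have hbj : extTuple n f j ≤ j := ext_bound f hstep j (by omega)
    have hbj1 : extTuple n f (j + 1) ≤ j + 1 := ext_bound f hstep (j + 1) (by omega)
    have hfj : f jF = extTuple n f (j + 1) := f_val f (j + 1) (by omega) hj1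
    have hmaps : ∀ L ∈ LpartF n f (j + 1), Function.update L jF ∅ ∈ LpartF n f j := by
      intro L hL
      obtain ⟨-, h1, h2, h3, h4⟩ := Finset.mem_filter.1 hL
      refine Finset.mem_filter.2 ⟨Finset.mem_univ _, ?_, ?_, ?_, ?_⟩
      · intro i x hx
        by_cases hi : i = jF
        · subst hi; rw [Function.update_self] at hx; exact absurd hx (Finset.notMem_empty x)
        · rw [Function.update_of_ne hi] at hx; exact h1 i x hx
      · intro i hi
        have hine : i ≠ jF := fun he => by rw [he, hjFv] at hi; omega
        rw [Function.update_of_ne hine]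
        exact h2 i (by omega)
      · intro i hi
        by_cases hine : i = jF
        · subst hine; exact Function.update_self _ _ _
        · have : (i : ℕ) ≠ j := fun he => hine (Fin.ext he)
          rw [Function.update_of_ne hine]
          exact h3 i (by omega)
      · intro i i' he hlt
        have hine : i ≠ jF := fun hh => by rw [hh, hjFv] at he; omega
        have hine' : i' ≠ jF := fun hh => by rw [hh] at hlt; rw [hjFv] at hlt; omega
        rw [Function.update_of_ne hine, Function.update_of_ne hine']
        exact h4 i i' he (by omega)
    rw [Finset.card_eq_sum_card_fiberwise hmaps]
    have hfib : ∀ M ∈ LpartF n f j,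
        ((LpartF n f (j + 1)).filter fun L => Function.update L jF ∅ = M).card
          = Nat.choose (1 + extTuple n f j) (extTuple n f (j + 1)) := by
      intro M hM
      obtain ⟨-, m1, m2, m3, m4⟩ := Finset.mem_filter.1 hM
      set U : Finset (Fin (n + 1)) := univ.filter (fun x : Fin (n + 1) => (x : ℕ) ≤ j) with hU
      set prevL : Finset (Fin (n + 1)) :=
        (if h0 : 0 < j then M ⟨j - 1, by omega⟩ else ∅) with hprevL
      have hprev_sub : prevL ⊆ U := by
        rw [hprevL]
        split
        · intro x hx
          have := m1 _ x hx
          simp only [hU, Finset.mem_filter, Finset.mem_univ, true_and]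
          simp only [Fin.val_mk] at this
          omega
        · exact Finset.empty_subset _
      have hprev_card : prevL.card = j - extTuple n f j := by
        rw [hprevL]
        split
        · rename_i h0
          rw [m2 ⟨j - 1, by omega⟩ (by simp; omega)]
          rw [f_val f j (by omega) hj]
          simp only [Fin.val_mk]
          omega
        · rename_i h0
          have : j = 0 := by omega
          subst this
          simp [ext_zero]
      have hMprev : ∀ i : Fin n, (i : ℕ) = j - 1 → 0 < j → M i = prevL := by
        intro i hi h0
        rw [hprevL, dif_pos h0]
        congr 1
        exact Fin.ext (by simp [hi])
      set tgt := (U.powerset).filter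
        (fun B => prevL ⊆ B ∧ B.card = (j + 1) - extTuple n f (j + 1)) with htgtdef
      have htgt : tgt.card = Nat.choose (1 + extTuple n f j) (extTuple n f (j + 1)) := by
        rw [htgtdef, card_between U prevL hprev_sub _ (by rw [hprev_card]; omega)]
        rw [card_le_fin j hj, hprev_card]
        have e1 : (j + 1) - (j - extTuple n f j) = 1 + extTuple n f j := by omega
        have e2 : ((j + 1) - extTuple n f (j + 1)) - (j - extTuple n f j)
            = (1 + extTuple n f j) - extTuple n f (j + 1) := by omega
        rw [e1, e2, Nat.choose_symm (by omega)]
      rw [← htgt]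
      refine Finset.card_nbij' (fun L => L jF) (fun B => Function.update M jF B) ?_ ?_ ?_ ?_ <;>
        simp only [Set.MapsTo, Set.LeftInvOn, Set.RightInvOn, Finset.mem_coe]
      · intro L hL
        obtain ⟨hL1, hLM⟩ := Finset.mem_filter.1 hL
        obtain ⟨-, h1, h2, h3, h4⟩ := Finset.mem_filter.1 hL1
        refine Finset.mem_filter.2 ⟨Finset.mem_powerset.2 ?_, ?_, ?_⟩
        · intro x hx
          simp only [hU, Finset.mem_filter, Finset.mem_univ, true_and]
          have := h1 jF x hx; omega
        · by_cases h0 : 0 < j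
          · have hsub := h4 ⟨j - 1, by omega⟩ jF (by simp; omega) (by simp [hjFv])
            have hMi : M ⟨j - 1, by omega⟩ = L ⟨j - 1, by omega⟩ := by
              rw [← hLM, Function.update_of_ne]
              intro hh
              have : j - 1 = j := by
                have := congrArg Fin.val hh; simpa using this
              omega
            rw [hprevL, dif_pos h0, hMi]
            exact hsub
          · rw [hprevL, dif_neg h0]; exact Finset.empty_subset _
        · rw [h2 jF (by simp [hjFv]), hfj, hjFv]
      · intro B hB
        obtain ⟨hBU, hprevB, hBcard⟩ := Finset.mem_filter.1 hB
        rw [Finset.mem_powerset] at hBU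
        refine Finset.mem_filter.2 ⟨Finset.mem_filter.2 ⟨Finset.mem_univ _, ?_, ?_, ?_, ?_⟩, ?_⟩
        · intro i x hx
          by_cases hi : i = jF
          · subst hi
            rw [Function.update_self] at hx
            have := hBU hx
            simp only [hU, Finset.mem_filter, Finset.mem_univ, true_and] at this
            omega
          · rw [Function.update_of_ne hi] at hx; exact m1 i x hx
        · intro i hi
          by_cases hine : i = jF
          · subst hine
            rw [Function.update_self, hBcard, hfj, hjFv]
          · have : (i : ℕ) ≠ j := fun he => hine (Fin.ext he)
            rw [Function.update_of_ne hine]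
            exact m2 i (by omega)
        · intro i hi
          have hine : i ≠ jF := fun he => by rw [he, hjFv] at hi; omega
          rw [Function.update_of_ne hine]
          exact m3 i (by omega)
        · intro i i' he hlt
          by_cases hi' : i' = jF
          · subst hi'
            rw [hjFv] at he
            have hine : i ≠ jF := fun hh => by rw [hh, hjFv] at he; omega
            rw [Function.update_of_ne hine, Function.update_self]
            rw [hMprev i (by omega) (by omega)]
            exact hprevB
          · have hvi' : (i' : ℕ) ≠ j := fun hh => hi' (Fin.ext hh)
            have hine : i ≠ jF := fun hh => by
              rw [hh, hjFv] at he; omega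
            rw [Function.update_of_ne hine, Function.update_of_ne hi']
            exact m4 i i' he (by omega)
        · rw [Function.update_idem]
          have hMjF : M jF = ∅ := m3 jF (by rw [hjFv])
          rw [← hMjF]
          exact Function.update_eq_self jF M
      · intro L hL
        obtain ⟨hL1, hLM⟩ := Finset.mem_filter.1 hL
        rw [← hLM, Function.update_idem]
        exact Function.update_eq_self jF L
      · intro B hB
        exact Function.update_self jF B M
    rw [Finset.sum_congr rfl hfib, Finset.sum_const, smul_eq_mul]

/-! ### The `T`-chains -/

def TPred (n : ℕ) (f : Fin n → ℕ) (j : ℕ) (T : Fin n → Finset (Fin (n + 1))) : Prop :=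
  (∀ i : Fin n, ∀ x ∈ T i, (i : ℕ) < (x : ℕ)) ∧
  (∀ i : Fin n, j ≤ (i : ℕ) → (T i).card = f i) ∧
  (∀ i : Fin n, (i : ℕ) < j → T i = ∅) ∧
  (∀ i i' : Fin n, (i' : ℕ) = (i : ℕ) + 1 → j ≤ (i : ℕ) → T i ⊆ T i' ∪ {i'.castSucc})

instance (n : ℕ) (f : Fin n → ℕ) (j : ℕ) : DecidablePred (TPred n f j) := fun _ => by
  unfold TPred; infer_instance

def TpartF (n : ℕ) (f : Fin n → ℕ) (j : ℕ) : Finset (Fin n → Finset (Fin (n + 1))) :=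
  univ.filter (TPred n f j)

lemma TpartF_top (n : ℕ) (f : Fin n → ℕ) : TpartF n f n = {fun _ => ∅} := by
  ext T
  simp only [TpartF, Finset.mem_filter, Finset.mem_univ, true_and, Finset.mem_singleton]
  constructor
  · rintro ⟨-, -, h3, -⟩
    exact funext fun i => h3 i i.isLt
  · rintro rfl
    exact ⟨fun i x hx => absurd hx (Finset.notMem_empty x),
      fun i hi => absurd i.isLt (by omega), fun i _ => rfl,
      fun i i' _ hi => absurd i.isLt (by omega)⟩

lemma Tcard (f : Fin n → ℕ) :
    ∀ t j, j + t = n → (TpartF n f j).card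
      = ∏ i ∈ Finset.Ico j n, Nat.choose (1 + extTuple n f (i + 2)) (extTuple n f (i + 1)) := by
  intro t
  induction t with
  | zero =>
    intro j hj
    have : j = n := by omega
    subst this
    simp [TpartF_top]
  | succ t ih =>
    intro j hjt
    have hjn : j < n := by omega
    rw [Finset.prod_eq_prod_Ico_succ_bot hjn, ← ih (j + 1) (by omega)]
    set jF : Fin n := ⟨j, hjn⟩ with hjF
    have hjFv : (jF : ℕ) = j := rfl
    have hfjF : f jF = extTuple n f (j + 1) := f_val f (j + 1) (by omega) hjn
    have hmaps : ∀ T ∈ TpartF n f j, Function.update T jF ∅ ∈ TpartF n f (j + 1) := by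
      intro T hT
      obtain ⟨-, h1, h2, h3, h4⟩ := Finset.mem_filter.1 hT
      refine Finset.mem_filter.2 ⟨Finset.mem_univ _, ?_, ?_, ?_, ?_⟩
      · intro i x hx
        by_cases hi : i = jF
        · subst hi; rw [Function.update_self] at hx; exact absurd hx (Finset.notMem_empty x)
        · rw [Function.update_of_ne hi] at hx; exact h1 i x hx
      · intro i hi
        have hine : i ≠ jF := fun he => by rw [he, hjFv] at hi; omega
        rw [Function.update_of_ne hine]
        exact h2 i (by omega)
      · intro i hi
        by_cases hine : i = jF
        · subst hine; exact Function.update_self _ _ _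
        · have : (i : ℕ) ≠ j := fun he => hine (Fin.ext he)
          rw [Function.update_of_ne hine]
          exact h3 i (by omega)
      · intro i i' he hge
        have hine : i ≠ jF := fun hh => by rw [hh, hjFv] at hge; omega
        have hine' : i' ≠ jF := fun hh => by rw [hh, hjFv] at he; omega
        rw [Function.update_of_ne hine, Function.update_of_ne hine']
        exact h4 i i' he (by omega)
    rw [Finset.card_eq_sum_card_fiberwise hmaps]
    have hfib : ∀ M ∈ TpartF n f (j + 1),
        ((TpartF n f j).filter fun T => Function.update T jF ∅ = M).card
          = Nat.choose (1 + extTuple n f (j + 2)) (extTuple n f (j + 1)) := by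
      intro M hM
      obtain ⟨-, m1, m2, m3, m4⟩ := Finset.mem_filter.1 hM
      set elt : Fin (n + 1) := ⟨j + 1, by omega⟩ with helt
      set Next : Finset (Fin (n + 1)) :=
        (if h : j + 1 < n then M ⟨j + 1, h⟩ else ∅) with hNext
      have hNext_amb : ∀ x ∈ Next, j + 1 < (x : ℕ) := by
        rw [hNext]
        split
        · intro x hx
          have := m1 _ x hx
          simpa using this
        · intro x hx; exact absurd hx (Finset.notMem_empty x)
      have helt_not : elt ∉ Next := by
        intro h
        have := hNext_amb elt h
        simp [helt] at this
      have hNext_card : Next.card = extTuple n f (j + 2) := by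
        rw [hNext]
        split
        · rename_i h
          rw [m2 ⟨j + 1, h⟩ (by simp)]
          exact f_val f (j + 2) (by omega) (by omega)
        · rename_i h
          rw [ext_top n f (j + 2) (by omega)]
          exact Finset.card_empty
      have hMNext : ∀ i : Fin n, (i : ℕ) = j + 1 → M i = Next := by
        intro i hi
        have hlt : j + 1 < n := by rw [← hi]; exact i.isLt
        rw [hNext, dif_pos hlt]
        congr 1
        exact Fin.ext (by simp [hi])
      set tgt := Finset.powersetCard (extTuple n f (j + 1)) (Next ∪ {elt}) with htgtdef
      have htgt : tgt.card = Nat.choose (1 + extTuple n f (j + 2)) (extTuple n f (j + 1)) := by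
        rw [htgtdef, Finset.card_powersetCard,
          Finset.card_union_of_disjoint (Finset.disjoint_singleton_right.2 helt_not),
          Finset.card_singleton, hNext_card, Nat.add_comm]
      rw [← htgt]
      refine Finset.card_nbij' (fun T => T jF) (fun B => Function.update M jF B) ?_ ?_ ?_ ?_ <;>
        simp only [Set.MapsTo, Set.LeftInvOn, Set.RightInvOn, Finset.mem_coe]
      · intro T hT
        obtain ⟨hT1, hTM⟩ := Finset.mem_filter.1 hT
        obtain ⟨-, h1, h2, h3, h4⟩ := Finset.mem_filter.1 hT1
        refine Finset.mem_powersetCard.2 ⟨?_, ?_⟩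
        · by_cases h : j + 1 < n
          · have hsub := h4 jF ⟨j + 1, h⟩ (by simp [hjFv]) (by simp [hjFv])
            have hTeq : T ⟨j + 1, h⟩ = M ⟨j + 1, h⟩ := by
              rw [← hTM, Function.update_of_ne]
              intro hh
              have := congrArg Fin.val hh
              simp [hjF] at this
            have hceq : (⟨j + 1, h⟩ : Fin n).castSucc = elt := Fin.ext (by simp [helt])
            rw [hTeq, hceq] at hsub
            rw [hMNext ⟨j + 1, h⟩ (by simp)] at hsub
            exact hsub
          · intro x hx
            have hjx := h1 jF x hx
            have hxn : (x : ℕ) < n + 1 := x.isLt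
            have : (x : ℕ) = j + 1 := by omega
            exact Finset.mem_union_right _
              (Finset.mem_singleton.2 (Fin.ext (by simp [helt, this])))
        · rw [h2 jF (le_refl _), hfjF]
      · intro B hB
        obtain ⟨hBsub, hBcard⟩ := Finset.mem_powersetCard.1 hB
        refine Finset.mem_filter.2 ⟨Finset.mem_filter.2 ⟨Finset.mem_univ _, ?_, ?_, ?_, ?_⟩, ?_⟩
        · intro i x hx
          by_cases hi : i = jF
          · subst hi
            rw [Function.update_self] at hx
            have := hBsub hx
            rcases Finset.mem_union.1 this with h | h
            · have := hNext_amb x h; omega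
            · have := Finset.mem_singleton.1 h
              rw [this]
              simp [helt, hjFv]
          · rw [Function.update_of_ne hi] at hx; exact m1 i x hx
        · intro i hi
          by_cases hine : i = jF
          · subst hine
            rw [Function.update_self, hBcard, hfjF]
          · have : (i : ℕ) ≠ j := fun he => hine (Fin.ext he)
            rw [Function.update_of_ne hine]
            exact m2 i (by omega)
        · intro i hi
          have hine : i ≠ jF := fun he => by rw [he, hjFv] at hi; omega
          rw [Function.update_of_ne hine]
          exact m3 i (by omega)
        · intro i i' he hge
          by_cases hi : i = jF
          · subst hi
            rw [hjFv] at he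
            have hine' : i' ≠ jF := fun hh => by rw [hh, hjFv] at he; omega
            rw [Function.update_of_ne hine', Function.update_self]
            rw [hMNext i' he]
            have hceq : i'.castSucc = elt := Fin.ext (by simp [helt, he])
            rw [hceq]
            exact hBsub
          · have hvi : (i : ℕ) ≠ j := fun he' => hi (Fin.ext he')
            have hine' : i' ≠ jF := fun hh => by rw [hh, hjFv] at he; omega
            rw [Function.update_of_ne hi, Function.update_of_ne hine']
            exact m4 i i' he (by omega)
        · rw [Function.update_idem]
          have hMjF : M jF = ∅ := m3 jF (by rw [hjFv]; omega)
          rw [← hMjF]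
          exact Function.update_eq_self jF M
      · intro T hT
        obtain ⟨-, hTM⟩ := Finset.mem_filter.1 hT
        rw [← hTM, Function.update_idem]
        exact Function.update_eq_self jF T
      · intro B hB
        exact Function.update_self jF B M
    rw [Finset.sum_congr rfl hfib, Finset.sum_const, smul_eq_mul, Nat.mul_comm]

/-! ### Chains of subsets -/

def ChainPred (n : ℕ) (S : Fin n → Finset (Fin (n + 1))) : Prop :=
  (∀ i : Fin n, (S i).card = (i : ℕ) + 1) ∧
  (∀ i i' : Fin n, (i' : ℕ) = (i : ℕ) + 1 → S i ⊆ S i' ∪ {i'.castSucc})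

instance (n : ℕ) : DecidablePred (ChainPred n) := fun _ => by
  unfold ChainPred; infer_instance

def chainsF (n : ℕ) : Finset (Fin n → Finset (Fin (n + 1))) :=
  univ.filter (ChainPred n)

def prof (n : ℕ) (S : Fin n → Finset (Fin (n + 1))) : Fin n → ℕ :=
  fun i => ((S i).filter fun x : Fin (n + 1) => (i : ℕ) < (x : ℕ)).card

def toL (n : ℕ) (S : Fin n → Finset (Fin (n + 1))) : Fin n → Finset (Fin (n + 1)) :=
  fun i => (S i).filter fun x : Fin (n + 1) => (x : ℕ) ≤ (i : ℕ)

def toT (n : ℕ) (S : Fin n → Finset (Fin (n + 1))) : Fin n → Finset (Fin (n + 1)) :=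
  fun i => (S i).filter fun x : Fin (n + 1) => (i : ℕ) < (x : ℕ)

lemma toL_card (S : Fin n → Finset (Fin (n + 1))) (hS : ChainPred n S) (i : Fin n) :
    (toL n S i).card = (i : ℕ) + 1 - prof n S i := by
  have hsplit : (toL n S i).card + (toT n S i).card = (S i).card := by
    rw [toL, toT]
    rw [show ((S i).filter fun x : Fin (n + 1) => (i : ℕ) < (x : ℕ))
        = (S i).filter fun x : Fin (n + 1) => ¬ ((x : ℕ) ≤ (i : ℕ)) from by
      apply Finset.filter_congr; intro x _; simp [Nat.not_le]]
    exact Finset.card_filter_add_card_filter_not _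
  have h2 := hS.1 i
  have h3 : prof n S i = (toT n S i).card := by simp [prof, toT]
  omega

lemma toL_mem (S : Fin n → Finset (Fin (n + 1))) (hS : ChainPred n S) :
    LPred n (prof n S) n (toL n S) := by
  refine ⟨?_, ?_, ?_, ?_⟩
  · intro i x hx
    exact (Finset.mem_filter.1 hx).2
  · intro i _
    exact toL_card S hS i
  · intro i hi
    exact absurd i.isLt (by omega)
  · intro i i' he _
    intro x hx
    obtain ⟨hxS, hxle⟩ := Finset.mem_filter.1 hx
    have hsub := hS.2 i i' he
    rcases Finset.mem_union.1 (hsub hxS) with h | h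
    · exact Finset.mem_filter.2 ⟨h, by omega⟩
    · exfalso
      have := Finset.mem_singleton.1 h
      have : (x : ℕ) = (i : ℕ) + 1 := by
        rw [this]; simp [he]
      omega

lemma toT_mem (S : Fin n → Finset (Fin (n + 1))) (hS : ChainPred n S) :
    TPred n (prof n S) 0 (toT n S) := by
  refine ⟨?_, ?_, ?_, ?_⟩
  · intro i x hx
    exact (Finset.mem_filter.1 hx).2
  · intro i _
    simp [prof, toT]
  · intro i hi
    omega
  · intro i i' he _
    intro x hx
    obtain ⟨hxS, hxgt⟩ := Finset.mem_filter.1 hx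
    have hsub := hS.2 i i' he
    rcases Finset.mem_union.1 (hsub hxS) with h | h
    · by_cases hxv : (x : ℕ) = (i' : ℕ)
      · exact Finset.mem_union_right _ (Finset.mem_singleton.2 (Fin.ext (by simp [hxv])))
      · exact Finset.mem_union_left _ (Finset.mem_filter.2 ⟨h, by omega⟩)
    · exact Finset.mem_union_right _ h

lemma prof_bound (S : Fin n → Finset (Fin (n + 1))) (hS : ChainPred n S) (i : Fin n) :
    prof n S i ≤ (i : ℕ) + 1 := by
  have h1 : prof n S i ≤ (S i).card := Finset.card_filter_le _ _
  rw [hS.1 i] at h1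
  exact h1

lemma prof_le (S : Fin n → Finset (Fin (n + 1))) (i : Fin n) :
    prof n S i ≤ n - (i : ℕ) := by
  have h3 : ((S i).filter fun x : Fin (n + 1) => (i : ℕ) < (x : ℕ)).card
      ≤ ((univ : Finset (Fin (n + 1))).filter fun x : Fin (n + 1) => (i : ℕ) < (x : ℕ)).card :=
    Finset.card_le_card (Finset.filter_subset_filter _ (Finset.subset_univ _))
  rw [card_gt_fin _ (by omega)] at h3
  exact h3

lemma fiber_card (f : Fin n → ℕ) (hf : ∀ i : Fin n, f i ≤ (i : ℕ) + 1) :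
    ((chainsF n).filter fun S => prof n S = f).card
      = (LpartF n f n).card * (TpartF n f 0).card := by
  rw [← Finset.card_product]
  refine Finset.card_nbij' (fun S => (toL n S, toT n S))
    (fun P => fun i => P.1 i ∪ P.2 i) ?_ ?_ ?_ ?_ <;>
    simp only [Set.MapsTo, Set.LeftInvOn, Set.RightInvOn, Finset.mem_coe]
  · intro S hS0
    obtain ⟨hS1, hprof⟩ := Finset.mem_filter.1 hS0
    obtain ⟨-, hS⟩ := Finset.mem_filter.1 hS1
    have hL := toL_mem S hS
    have hT := toT_mem S hS
    rw [hprof] at hL hT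
    exact Finset.mem_product.2 ⟨Finset.mem_filter.2 ⟨Finset.mem_univ _, hL⟩,
      Finset.mem_filter.2 ⟨Finset.mem_univ _, hT⟩⟩
  · intro P hP
    obtain ⟨hPL, hPT⟩ := Finset.mem_product.1 hP
    obtain ⟨-, l1, l2, l3, l4⟩ := Finset.mem_filter.1 hPL
    obtain ⟨-, t1, t2, t3, t4⟩ := Finset.mem_filter.1 hPT
    have hdisj : ∀ i : Fin n, Disjoint (P.1 i) (P.2 i) := by
      intro i
      refine Finset.disjoint_left.2 fun x hx1 hx2 => ?_
      have := l1 i x hx1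
      have := t1 i x hx2
      omega
    have hcard : ∀ i : Fin n, (P.1 i ∪ P.2 i).card = (i : ℕ) + 1 := by
      intro i
      rw [Finset.card_union_of_disjoint (hdisj i), l2 i i.isLt, t2 i (Nat.zero_le _)]
      have := hf i
      omega
    have hchain : ChainPred n (fun i => P.1 i ∪ P.2 i) := by
      refine ⟨hcard, ?_⟩
      intro i i' he
      intro x hx
      rcases Finset.mem_union.1 hx with h | h
      · have := l4 i i' he i'.isLt h
        exact Finset.mem_union_left _ (Finset.mem_union_left _ this)
      · have := t4 i i' he (Nat.zero_le _) h
        rcases Finset.mem_union.1 this with h' | h'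
        · exact Finset.mem_union_left _ (Finset.mem_union_right _ h')
        · exact Finset.mem_union_right _ h'
    refine Finset.mem_filter.2 ⟨Finset.mem_filter.2 ⟨Finset.mem_univ _, hchain⟩, ?_⟩
    funext i
    show ((P.1 i ∪ P.2 i).filter fun x : Fin (n + 1) => (i : ℕ) < (x : ℕ)).card = f i
    have heq : ((P.1 i ∪ P.2 i).filter fun x : Fin (n + 1) => (i : ℕ) < (x : ℕ)) = P.2 i := by
      rw [Finset.filter_union]
      rw [Finset.filter_eq_empty_iff.2 (fun x hx => by have := l1 i x hx; omega)]
      rw [Finset.filter_eq_self.2 (fun x hx => t1 i x hx)]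
      exact Finset.empty_union _
    rw [heq]
    exact t2 i (Nat.zero_le _)
  · intro S hS0
    funext i
    show toL n S i ∪ toT n S i = S i
    ext x
    simp only [Finset.mem_union, toL, toT, Finset.mem_filter]
    constructor
    · rintro (⟨h, -⟩ | ⟨h, -⟩) <;> exact h
    · intro h
      rcases le_or_gt (x : ℕ) (i : ℕ) with hle | hlt
      · exact Or.inl ⟨h, hle⟩
      · exact Or.inr ⟨h, hlt⟩
  · intro P hP
    obtain ⟨hPL, hPT⟩ := Finset.mem_product.1 hP
    obtain ⟨-, l1, -, -, -⟩ := Finset.mem_filter.1 hPL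
    obtain ⟨-, t1, -, -, -⟩ := Finset.mem_filter.1 hPT
    have h1 : toL n (fun i => P.1 i ∪ P.2 i) = P.1 := by
      funext i
      ext x
      simp only [toL, Finset.mem_filter, Finset.mem_union]
      constructor
      · rintro ⟨h | h, hle⟩
        · exact h
        · exact absurd (t1 i x h) (by omega)
      · intro h
        exact ⟨Or.inl h, l1 i x h⟩
    have h2 : toT n (fun i => P.1 i ∪ P.2 i) = P.2 := by
      funext i
      ext x
      simp only [toT, Finset.mem_filter, Finset.mem_union]
      constructor
      · rintro ⟨h | h, hgt⟩
        · exact absurd (l1 i x h) (by omega)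
        · exact h
      · intro h
        exact ⟨Or.inr h, t1 i x h⟩
    rw [h1, h2]

lemma prof_motzkin (S : Fin n → Finset (Fin (n + 1))) (hS : ChainPred n S) :
    MP n (prof n S) := by
  have hL := toL_mem S hS
  have hT := toT_mem S hS
  intro k hk
  suffices h : extTuple n (prof n S) (k + 1) ≤ extTuple n (prof n S) k + 1 ∧
      extTuple n (prof n S) k ≤ extTuple n (prof n S) (k + 1) + 1 by omega
  by_cases hk0 : k = 0
  · subst hk0
    rw [ext_zero]
    by_cases hn0 : n = 0
    · rw [ext_top n _ 1 (by omega)]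
      omega
    · have h1 : extTuple n (prof n S) 1 = prof n S ⟨0, by omega⟩ :=
        (f_val (prof n S) 1 (le_refl _) (by omega)).symm
      have := prof_bound S hS ⟨0, by omega⟩
      rw [h1]
      simp only [Fin.val_mk] at this
      omega
  by_cases hkn : k = n
  · rw [hkn]
    rw [ext_top n _ (n + 1) (by omega)]
    have hn1 : 1 ≤ n := by omega
    have h1 : extTuple n (prof n S) n = prof n S ⟨n - 1, by omega⟩ :=
      (f_val (prof n S) n hn1 (le_refl _)).symm
    have h4 := prof_le S ⟨n - 1, by omega⟩
    simp only [Fin.val_mk] at h4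
    omega
  · have hk1 : 1 ≤ k := by omega
    have hkn' : k < n := by omega
    set i : Fin n := ⟨k - 1, by omega⟩ with hi
    set i' : Fin n := ⟨k, by omega⟩ with hi'
    have he' : (i' : ℕ) = (i : ℕ) + 1 := by simp [hi, hi']; omega
    have hek : extTuple n (prof n S) k = prof n S i :=
      (f_val (prof n S) k hk1 (by omega)).symm
    have hek1 : extTuple n (prof n S) (k + 1) = prof n S i' :=
      (f_val (prof n S) (k + 1) (by omega) (by omega)).symm
    constructor
    · -- rise bound, via toL
      have hsub := hL.2.2.2 i i' he' i'.isLt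
      have hcle := Finset.card_le_card hsub
      rw [hL.2.1 i i.isLt, hL.2.1 i' i'.isLt] at hcle
      have hb1 := prof_bound S hS i
      have hb2 := prof_bound S hS i'
      rw [hek, hek1]
      omega
    · -- fall bound, via toT
      have hsub := hT.2.2.2 i i' he' (Nat.zero_le _)
      have hcle := Finset.card_le_card hsub
      have hcu := Finset.card_union_le (toT n S i') {i'.castSucc}
      rw [Finset.card_singleton] at hcu
      have h1 : prof n S i = (toT n S i).card := by simp [prof, toT]
      have h2 : prof n S i' = (toT n S i').card := by simp [prof, toT]
      rw [hek, hek1]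
      omega

lemma genocchi_card (n : ℕ) : genocchi (n + 1) = (chainsF n).card := by
  have e : {S : Fin n → Finset (Fin (n + 1)) //
      (∀ i : Fin n, (S i).card = (i : ℕ) + 1) ∧
      (∀ i : Fin n, ∀ h : (i : ℕ) + 1 < n,
        S i ⊆ S ⟨(i : ℕ) + 1, h⟩ ∪ {⟨(i : ℕ) + 1, by omega⟩})}
      ≃ {S // S ∈ chainsF n} := by
    apply Equiv.subtypeEquivRight
    intro S
    simp only [chainsF, ChainPred, Finset.mem_filter, Finset.mem_univ, true_and]
    constructor
    · rintro ⟨hc, hch⟩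
      refine ⟨hc, fun i i' he' => ?_⟩
      have h : (i : ℕ) + 1 < n := he' ▸ i'.isLt
      have h2 := hch i h
      have h3 : (⟨(i : ℕ) + 1, h⟩ : Fin n) = i' := Fin.ext he'.symm
      rw [h3] at h2
      have h4 : (⟨(i : ℕ) + 1, by omega⟩ : Fin (n + 1)) = i'.castSucc :=
        Fin.ext (by simp [he'.symm])
      rwa [h4] at h2
    · rintro ⟨hc, hch⟩
      refine ⟨hc, fun i h => ?_⟩
      have h2 := hch i ⟨(i : ℕ) + 1, h⟩ rfl
      have h4 : (⟨(i : ℕ) + 1, h⟩ : Fin n).castSucc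
          = (⟨(i : ℕ) + 1, by omega⟩ : Fin (n + 1)) := Fin.ext rfl
      rwa [h4] at h2
  have h1 : genocchi (n + 1) = Nat.card {S // S ∈ chainsF n} := Nat.card_congr e
  rw [h1, Nat.card_eq_fintype_card, Fintype.card_coe]

lemma chains_card (f : Fin n → ℕ) (hMP : MP n f) :
    ((chainsF n).filter fun S => prof n S = f).card
      = (∏ i ∈ Finset.range n, Nat.choose (1 + extTuple n f i) (extTuple n f (i + 1)))
        * (∏ i ∈ Finset.range n, Nat.choose (1 + extTuple n f (i + 2)) (extTuple n f (i + 1))) := by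
  have hf : ∀ i : Fin n, f i ≤ (i : ℕ) + 1 := fun i => by
    have := mp_bound f hMP ((i : ℕ) + 1) (by omega)
    rwa [ext_succ n f i] at this
  rw [fiber_card f hf, Lcard f (mp_step f hMP) n (le_refl n), Tcard f n 0 (by omega),
    Finset.range_eq_Ico]

/-! ### The weight identity -/

lemma pow_card_filter (s : Finset ℕ) (p : ℕ → Prop) [DecidablePred p] :
    (2 : ℕ) ^ (s.filter p).card = ∏ i ∈ s, (if p i then 2 else 1) := by
  rw [Finset.prod_ite, Finset.prod_const, Finset.prod_const, one_pow, mul_one]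

lemma choose_fall (c : ℕ) : (c + 2).choose c * 2 = (c + 2) * (c + 1) := by
  have h1 : (c + 2).choose c = (c + 2).choose 2 := by
    rw [← Nat.choose_symm (show c ≤ c + 2 by omega)]
    congr 1
    omega
  rw [h1, Nat.choose_two_right]
  have h2 : 2 ∣ (c + 2) * (c + 2 - 1) := by
    have := Nat.even_mul_succ_self (c + 1)
    have h3 : (c + 1) * (c + 1 + 1) = (c + 2) * (c + 2 - 1) := by
      rw [show c + 2 - 1 = c + 1 from rfl]; ring
    rw [h3] at this
    exact this.two_dvd
  exact Nat.div_mul_cancel h2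

lemma edge_eq (a b : ℕ) (h : b = a + 1 ∨ b = a ∨ a = b + 1) :
    Nat.choose (1 + a) b * Nat.choose (1 + b) a *
      ((if b = a + 1 then 2 else 1) * (if a = b + 1 then 2 else 1)) = (1 + a) * (1 + b) := by
  rcases h with h | h | h
  · have h2 : ¬ (a = b + 1) := by omega
    rw [if_pos h, if_neg h2, h]
    rw [show 1 + a = a + 1 from by omega, Nat.choose_self,
      show 1 + (a + 1) = a + 2 from by omega]
    calc 1 * (a + 2).choose a * (2 * 1) = (a + 2).choose a * 2 := by ring
    _ = (a + 2) * (a + 1) := choose_fall a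
    _ = (a + 1) * (a + 2) := by ring
  · have h1 : ¬ (b = a + 1) := by omega
    have h2 : ¬ (a = b + 1) := by omega
    rw [if_neg h1, if_neg h2, h]
    rw [show 1 + a = a + 1 from by omega, Nat.choose_succ_self_right]
    ring
  · have h1 : ¬ (b = a + 1) := by omega
    rw [if_neg h1, if_pos h, h]
    rw [show 1 + b = b + 1 from by omega, Nat.choose_self,
      show 1 + (b + 1) = b + 2 from by omega]
    calc (b + 2).choose b * 1 * (1 * 2) = (b + 2).choose b * 2 := by ring
    _ = (b + 2) * (b + 1) := choose_fall b

lemma weight_eq (f : Fin n → ℕ) (hMP : MP n f) :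
    ((∏ i ∈ Finset.range n, Nat.choose (1 + extTuple n f i) (extTuple n f (i + 1)))
      * (∏ i ∈ Finset.range n, Nat.choose (1 + extTuple n f (i + 2)) (extTuple n f (i + 1))))
      * 2 ^ risesFalls n f
    = ∏ k ∈ Finset.Icc 1 n, (1 + extTuple n f k) ^ 2 := by
  have hP1 : ∏ i ∈ Finset.range n, Nat.choose (1 + extTuple n f i) (extTuple n f (i + 1))
      = ∏ i ∈ Finset.range (n + 1),
          Nat.choose (1 + extTuple n f i) (extTuple n f (i + 1)) := by
    rw [Finset.prod_range_succ, ext_top n f (n + 1) (by omega), Nat.choose_zero_right, mul_one]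
  have hP2 : ∏ i ∈ Finset.range n, Nat.choose (1 + extTuple n f (i + 2)) (extTuple n f (i + 1))
      = ∏ i ∈ Finset.range (n + 1),
          Nat.choose (1 + extTuple n f (i + 1)) (extTuple n f i) := by
    rw [Finset.prod_range_succ' (fun i => Nat.choose (1 + extTuple n f (i + 1)) (extTuple n f i)),
      ext_zero n f, Nat.choose_zero_right, mul_one]
  have hRF : (2 : ℕ) ^ risesFalls n f
      = ∏ i ∈ Finset.range (n + 1),
          ((if extTuple n f (i + 1) = extTuple n f i + 1 then 2 else 1) *
            (if extTuple n f i = extTuple n f (i + 1) + 1 then 2 else 1)) := by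
    rw [risesFalls, pow_add, pow_card_filter, pow_card_filter, ← Finset.prod_mul_distrib]
  rw [hP1, hP2, hRF, ← Finset.prod_mul_distrib, ← Finset.prod_mul_distrib]
  have hedge : ∀ i ∈ Finset.range (n + 1),
      Nat.choose (1 + extTuple n f i) (extTuple n f (i + 1)) *
        Nat.choose (1 + extTuple n f (i + 1)) (extTuple n f i) *
        ((if extTuple n f (i + 1) = extTuple n f i + 1 then 2 else 1) *
          (if extTuple n f i = extTuple n f (i + 1) + 1 then 2 else 1))
      = (1 + extTuple n f i) * (1 + extTuple n f (i + 1)) := by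
    intro i hi
    exact edge_eq _ _ (hMP i (by have := Finset.mem_range.1 hi; omega))
  rw [Finset.prod_congr rfl hedge, Finset.prod_mul_distrib]
  have hQ1 : ∏ i ∈ Finset.range (n + 1), (1 + extTuple n f i)
      = ∏ i ∈ Finset.range n, (1 + extTuple n f (i + 1)) := by
    rw [Finset.prod_range_succ' (fun i => 1 + extTuple n f i), ext_zero n f]
    simp
  have hQ2 : ∏ i ∈ Finset.range (n + 1), (1 + extTuple n f (i + 1))
      = ∏ i ∈ Finset.range n, (1 + extTuple n f (i + 1)) := by
    rw [Finset.prod_range_succ, ext_top n f (n + 1) (by omega)]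
    simp
  rw [hQ1, hQ2, ← Finset.prod_mul_distrib]
  rw [show Finset.Icc 1 n = Finset.Ico 1 (n + 1) from by
    ext x; simp [Finset.mem_Icc, Finset.mem_Ico]]
  rw [Finset.prod_Ico_eq_prod_range]
  apply Finset.prod_congr (by norm_num)
  intro i _
  rw [show 1 + i = i + 1 from by omega, sq]

end GenocchiAux

open GenocchiAux in
/-- `h_{n+1} = ∑_{f ∈ M_{n+1}} ∏_{k=1}^n (1+f_k)^2 / 2^{l(f)}`, the sum being over all
Motzkin paths from `(0,0)` to `(n+1,0)`. -/
theorem genocchi_eq_sum_over_motzkin (n : ℕ) :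
    (genocchi (n + 1) : ℚ) =
      ∑ᶠ f ∈ motzkinSet n,
        (∏ k ∈ Finset.Icc 1 n, ((1 + extTuple n f k : ℚ)) ^ 2) / 2 ^ risesFalls n f := by
  have hset : motzkinSet n = ↑(motzF n) := (coe_motzF n).symm
  rw [hset, finsum_mem_coe_finset]
  have hmem : ∀ S ∈ chainsF n, prof n S ∈ motzF n := by
    intro S hS0
    obtain ⟨-, hS⟩ := Finset.mem_filter.1 hS0
    refine Finset.mem_filter.2 ⟨?_, prof_motzkin S hS⟩
    refine Finset.mem_image.2 ⟨fun i => ⟨prof n S i, ?_⟩, Finset.mem_univ _, rfl⟩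
    have := prof_bound S hS i
    have := i.isLt
    omega
  have hcard : genocchi (n + 1)
      = ∑ f ∈ motzF n, ((chainsF n).filter fun S => prof n S = f).card := by
    rw [genocchi_card, Finset.card_eq_sum_card_fiberwise hmem]
  rw [hcard]
  push_cast
  apply Finset.sum_congr rfl
  intro f hf
  have hMP : MP n f := (Finset.mem_filter.1 hf).2
  rw [chains_card f hMP]
  rw [eq_div_iff (by positivity : ((2 : ℚ) ^ risesFalls n f) ≠ 0)]
  exact_mod_cast weight_eq f hMP
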